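/- Fix integers a, m ≥ 1 with gcd(a,m) = 1, a real number z, and ε > 0. Let f(p) = ±1 be independent fair coin flips at primes. Then there exists δ = δ(ε, z, a, m) > 0 and X_0 such that for all x ≥ X_0, P(|∑_{p ≤ x, p ≡ a (mod m)} f(p)/p − z| < ε) > δ. -/

import Mathlib

open MeasureTheory ProbabilityTheory Filter Topology

section Helpers

open ArithmeticFunction vonMangoldt LSeries in
private lemma lemA {q : ℕ} [NeZero q] {a : ZMod q} (ha : IsUnit a) :
    ¬ Summable (fun n : ℕ ↦ if n.Prime ∧ (n : ZMod q) = a then (n : ℝ)⁻¹ else 0) := by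
  set g : ℕ → ℝ := fun n ↦ if n.Prime ∧ (n : ZMod q) = a then (n : ℝ)⁻¹ else 0 with hgdef
  intro H
  have hg0 : ∀ n, 0 ≤ g n := by
    intro n; simp only [hgdef]; split <;> positivity
  obtain ⟨C', hC'⟩ := LSeries_residueClass_lower_bound ha
  have hS0 := summable_residueClass_non_primes_div a
  set C₀ : ℝ := ∑' n : ℕ, (if n.Prime then 0 else residueClass a n) / n with hC₀
  set τ : ℝ := (q.totient : ℝ)⁻¹ with hτ
  have hτ0 : 0 < τ := by
    rw [hτ]; exact inv_pos.mpr (by exact_mod_cast q.totient.pos_of_neZero)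
  have hsummh : ∀ N : ℕ, Summable (fun n ↦ if N ≤ n then g n else 0) := by
    intro N
    refine H.of_nonneg_of_le (fun n ↦ ?_) (fun n ↦ ?_)
    · split
      · exact hg0 n
      · exact le_rfl
    · split
      · exact le_rfl
      · exact hg0 n
  have htail : Tendsto (fun N : ℕ ↦ ∑' n, if N ≤ n then g n else 0) atTop (𝓝 0) := by
    have hsplit : ∀ N : ℕ, ∑' n, (if N ≤ n then g n else 0)
        = (∑' n, g n) - ∑ n ∈ Finset.range N, g n := by
      intro N
      have h1 : (fun n ↦ if N ≤ n then g n else 0)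
          = fun n ↦ g n - (if n ∈ Finset.range N then g n else 0) := by
        funext n
        by_cases hn : N ≤ n
        · rw [if_pos hn, if_neg (by simpa [Finset.mem_range] using hn), sub_zero]
        · rw [if_neg hn, if_pos (Finset.mem_range.mpr (Nat.lt_of_not_le hn)), sub_self]
      have h2 : Summable (fun n ↦ if n ∈ Finset.range N then g n else 0) :=
        summable_of_finite_support <| (Set.finite_Iio N).subset <| by
          intro n hn
          simp only [Function.mem_support, ne_eq, ite_eq_right_iff, not_forall] at hn
          simpa using hn.1
      rw [h1, Summable.tsum_sub H h2, tsum_eq_sum (s := Finset.range N) (fun n hn ↦ if_neg hn)]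
      congr 1
      exact Finset.sum_congr rfl fun n hn ↦ if_pos hn
    simp only [hsplit]
    have h0 : Tendsto (fun N : ℕ ↦ (∑' n, g n) - ∑ n ∈ Finset.range N, g n) atTop
        (𝓝 ((∑' n, g n) - ∑' n, g n)) := tendsto_const_nhds.sub H.hasSum.tendsto_sum_nat
    simpa using h0
  obtain ⟨N, hN⟩ : ∃ N : ℕ, ∑' n, (if N ≤ n then g n else 0) ≤ τ / 2 := by
    have h := htail.eventually_le_const (show (0:ℝ) < τ/2 by positivity)
    exact ⟨h.exists.choose, h.exists.choose_spec⟩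
  set TN : ℝ := ∑' n, (if N ≤ n then g n else 0) with hTN
  have hTN0 : 0 ≤ TN := tsum_nonneg fun n ↦ by
    split
    · exact hg0 n
    · exact le_rfl
  set C₁ : ℝ := ∑ n ∈ Finset.range N, ArithmeticFunction.vonMangoldt n / n with hC₁
  have hC₁0 : 0 ≤ C₁ := Finset.sum_nonneg fun n _ ↦ by
    have := vonMangoldt_nonneg (n := n); positivity
  have hC₀0 : 0 ≤ C₀ := tsum_nonneg fun n ↦ by
    have h1 := residueClass_nonneg a n
    split <;> positivity
  have hfin : Summable (fun n ↦ if n ∈ Finset.range N then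
      ArithmeticFunction.vonMangoldt n / (n:ℝ) else 0) :=
    summable_of_finite_support <| (Set.finite_Iio N).subset <| by
      intro n hn
      simp only [Function.mem_support, ne_eq, ite_eq_right_iff, not_forall] at hn
      simpa using hn.1
  have key : ∀ x : ℝ, x ∈ Set.Ioc 1 2 →
      ∑' n, residueClass a n / (n : ℝ) ^ x ≤ C₀ + C₁ + (x - 1)⁻¹ * TN := by
    intro x hx
    have hx1 : (1:ℝ) < x := hx.1
    have hxm : 0 < x - 1 := by linarith
    set M : ℕ → ℝ := fun n ↦ (if n.Prime then 0 else residueClass a n) / n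
      + ((if n ∈ Finset.range N then ArithmeticFunction.vonMangoldt n / (n:ℝ) else 0)
      + (x - 1)⁻¹ * (if N ≤ n then g n else 0)) with hM
    have hMsum : Summable M := hS0.add (hfin.add ((hsummh N).mul_left _))
    have hle : ∀ n, residueClass a n / (n : ℝ) ^ x ≤ M n := by
      intro n
      have hMn3 : 0 ≤ (x - 1)⁻¹ * (if N ≤ n then g n else 0) := by
        have h : (0:ℝ) ≤ (if N ≤ n then g n else 0) := by
          split
          · exact hg0 n
          · exact le_rfl
        positivity
      have hMn2 : 0 ≤ (if n ∈ Finset.range N then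
          ArithmeticFunction.vonMangoldt n / (n:ℝ) else 0) := by
        have := vonMangoldt_nonneg (n := n); split <;> positivity
      have hMn1 : 0 ≤ (if n.Prime then 0 else residueClass a n) / n := by
        have := residueClass_nonneg a n; split <;> positivity
      have hMge : M n = (if n.Prime then 0 else residueClass a n) / n
          + ((if n ∈ Finset.range N then ArithmeticFunction.vonMangoldt n / (n:ℝ) else 0)
          + (x - 1)⁻¹ * (if N ≤ n then g n else 0)) := rfl
      rcases Nat.eq_zero_or_pos n with rfl | hn0
      · rw [hMge]; simpa using by positivity
      have hn0' : (0:ℝ) < n := by exact_mod_cast hn0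
      have hnx : (n:ℝ) ≤ (n:ℝ) ^ x := by
        conv_lhs => rw [← Real.rpow_one (n:ℝ)]
        exact Real.rpow_le_rpow_of_exponent_le (by exact_mod_cast hn0) hx1.le
      have hnx0 : (0:ℝ) < (n:ℝ) ^ x := Real.rpow_pos_of_pos hn0' _
      by_cases hcls : (n : ZMod q) = a
      swap
      · have hz : residueClass a n = 0 :=
          Set.indicator_of_notMem (s := {k : ℕ | (k : ZMod q) = a}) hcls _
        rw [hz, hMge, zero_div]
        positivity
      have hres : residueClass a n = ArithmeticFunction.vonMangoldt n :=
        Set.indicator_of_mem (s := {k : ℕ | (k : ZMod q) = a}) hcls _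
      by_cases hp : n.Prime
      swap
      · rw [hMge, if_neg hp]
        have h1 : residueClass a n / (n:ℝ) ^ x ≤ residueClass a n / n :=
          div_le_div_of_nonneg_left (residueClass_nonneg a n) hn0' hnx
        linarith
      have hΛ : ArithmeticFunction.vonMangoldt n = Real.log n := vonMangoldt_apply_prime hp
      by_cases hnN : n ∈ Finset.range N
      · have h1 : residueClass a n / (n:ℝ) ^ x ≤ ArithmeticFunction.vonMangoldt n / n := by
          rw [hres]
          exact div_le_div_of_nonneg_left vonMangoldt_nonneg hn0' hnx
        rw [hMge, if_pos hp, if_pos hnN, zero_div]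
        linarith
      · have hNn : N ≤ n := by simpa [Finset.mem_range, not_lt] using hnN
        have hgn : g n = (n:ℝ)⁻¹ := by simp [hgdef, hp, hcls]
        have hlog : Real.log n ≤ (x - 1)⁻¹ * (n:ℝ) ^ (x - 1) := by
          have h2 : Real.log ((n:ℝ) ^ (x-1)) ≤ (n:ℝ) ^ (x-1) - 1 :=
            Real.log_le_sub_one_of_pos (Real.rpow_pos_of_pos hn0' _)
          rw [Real.log_rpow hn0'] at h2
          rw [inv_mul_eq_div, le_div_iff₀ hxm]
          nlinarith [Real.rpow_pos_of_pos hn0' (x-1)]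
        have h1 : residueClass a n / (n:ℝ) ^ x ≤ (x-1)⁻¹ * (n:ℝ)⁻¹ := by
          rw [hres, hΛ, div_le_iff₀ hnx0]
          calc Real.log n ≤ (x - 1)⁻¹ * (n:ℝ) ^ (x - 1) := hlog
            _ = (x-1)⁻¹ * (n:ℝ)⁻¹ * (n:ℝ) ^ x := by
              rw [mul_assoc]
              congr 1
              rw [← Real.rpow_neg_one (n:ℝ), ← Real.rpow_add hn0']
              congr 1; ring
        rw [hMge, if_pos hp, if_neg hnN, if_pos hNn, hgn, zero_div]
        linarith
    have hsumx : Summable (fun n ↦ residueClass a n / (n : ℝ) ^ x) :=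
      summable_real_of_abscissaOfAbsConv_lt <|
        (abscissaOfAbsConv_residueClass_le_one a).trans_lt <| by exact_mod_cast hx1
    refine (Summable.tsum_le_tsum hle hsumx hMsum).trans ?_
    rw [show M = fun n ↦ (if n.Prime then 0 else residueClass a n) / n
      + ((if n ∈ Finset.range N then ArithmeticFunction.vonMangoldt n / (n:ℝ) else 0)
      + (x - 1)⁻¹ * (if N ≤ n then g n else 0)) from rfl]
    rw [Summable.tsum_add hS0 (hfin.add ((hsummh N).mul_left _)),
        Summable.tsum_add hfin ((hsummh N).mul_left _), tsum_mul_left]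
    have hts : ∑' n : ℕ, (if n ∈ Finset.range N then
        ArithmeticFunction.vonMangoldt n / (n:ℝ) else 0) = C₁ := by
      rw [tsum_eq_sum (s := Finset.range N) (fun n hn ↦ if_neg hn)]
      exact Finset.sum_congr rfl fun n hn ↦ if_pos hn
    rw [hts, ← hTN, ← hC₀]
    ring_nf
    exact le_rfl
  set D : ℝ := C' + C₀ + C₁ with hD
  have hbound : ∀ x : ℝ, x ∈ Set.Ioc 1 2 → τ * (x - 1)⁻¹ ≤ D + (x-1)⁻¹ * (τ/2) := by
    intro x hx
    have h1 := (hC' hx).trans (key x hx)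
    have hxm : (0:ℝ) < (x - 1)⁻¹ := by
      have : (0:ℝ) < x - 1 := by linarith [hx.1]
      positivity
    have h2 : (x-1)⁻¹ * TN ≤ (x-1)⁻¹ * (τ/2) := mul_le_mul_of_nonneg_left hN hxm.le
    rw [div_eq_mul_inv] at h1
    rw [hD]; linarith
  set D' : ℝ := max D 0 + 1 with hD'
  have hD'0 : 0 < D' := by positivity
  set x : ℝ := 1 + min 1 (τ / (4 * D')) with hxdef
  have hmin0 : 0 < min 1 (τ / (4 * D')) := lt_min one_pos (by positivity)
  have hxIoc : x ∈ Set.Ioc 1 2 := by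
    constructor
    · rw [hxdef]; linarith
    · rw [hxdef]; have := min_le_left 1 (τ / (4 * D')); linarith
  have h3 := hbound x hxIoc
  have hx1 : x - 1 = min 1 (τ / (4 * D')) := by rw [hxdef]; ring
  have h4 : 4 * D' / τ ≤ (x - 1)⁻¹ := by
    rw [hx1, le_inv_comm₀ (by positivity) hmin0]
    calc min 1 (τ / (4 * D')) ≤ τ / (4 * D') := min_le_right _ _
      _ = (4 * D' / τ)⁻¹ := by rw [inv_div]
  have h5 : (4 * D' / τ) * (τ / 2) ≤ (x-1)⁻¹ * (τ/2) :=
    mul_le_mul_of_nonneg_right h4 (by positivity)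
  have h6 : (4 * D' / τ) * (τ / 2) = 2 * D' := by
    field_simp; ring
  have h7 : D < 2 * D' := by
    rw [hD']; nlinarith [le_max_left D 0, le_max_right D 0]
  have h8 : τ * (x-1)⁻¹ = 2 * ((x-1)⁻¹ * (τ/2)) := by ring
  nlinarith [h5, h3]

private lemma greedy {g : ℕ → ℝ}
    (hdiv : Tendsto (fun n ↦ ∑ i ∈ Finset.range n, g i) atTop atTop)
    (hg : Tendsto g atTop (𝓝 0)) (z ε : ℝ) (hε : 0 < ε) (n₀ : ℕ) :
    ∃ K, n₀ ≤ K ∧ ∃ v : ℕ → ℝ, (∀ n, v n = 1 ∨ v n = -1) ∧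
      |(∑ n ∈ Finset.range K, v n * g n) - z| < ε := by
  set S : ℕ → ℝ := fun n => Nat.rec 0 (fun k Sk => Sk + (if Sk ≤ z then g k else -g k)) n
    with hSdef
  have hS : ∀ n, S (n + 1) = S n + (if S n ≤ z then g n else -g n) := fun n => rfl
  set v : ℕ → ℝ := fun n => if S n ≤ z then 1 else -1 with hv
  have hv1 : ∀ n, v n = 1 ∨ v n = -1 := by
    intro n
    by_cases h : S n ≤ z
    · exact Or.inl (by simp only [hv]; rw [if_pos h])
    · exact Or.inr (by simp only [hv]; rw [if_neg h])
  have hSsum : ∀ K, S K = ∑ n ∈ Finset.range K, v n * g n := by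
    intro K
    induction K with
    | zero => simp [hSdef]
    | succ k ih =>
      rw [Finset.sum_range_succ, ← ih, hS]
      simp only [hv]
      by_cases h : S k ≤ z
      · rw [if_pos h, if_pos h, one_mul]
      · rw [if_neg h, if_neg h, neg_one_mul]
  obtain ⟨n', hn'⟩ : ∃ n', ∀ k ≥ n', g k < ε := by
    have h := hg.eventually_lt_const hε
    rw [eventually_atTop] at h
    exact h
  set n₁ : ℕ := max n₀ n' with hn₁
  have hgn₁ : ∀ k ≥ n₁, g k < ε := fun k hk => hn' k (le_trans (le_max_right _ _) hk)
  obtain ⟨k, hk, hkx⟩ : ∃ k ≥ n₁, |S (k + 1) - z| < ε := by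
    by_contra hcon
    push_neg at hcon
    have hconst : ∀ k ≥ n₁, ((S (k+1) ≤ z) ↔ (S k ≤ z)) := by
      intro k hk
      by_cases h : S k ≤ z
      · simp only [h, iff_true]
        by_contra hgt
        push_neg at hgt
        have h1 : S (k+1) = S k + g k := by rw [hS, if_pos h]
        rcases le_abs.mp (hcon k hk) with h2 | h2
        · have := hgn₁ k hk; linarith
        · linarith
      · simp only [h, iff_false]
        push_neg at h ⊢
        by_contra hle
        push_neg at hle
        have h1 : S (k+1) = S k - g k := by rw [hS, if_neg (not_le.mpr h)]; ring
        rcases le_abs.mp (hcon k hk) with h2 | h2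
        · linarith
        · have := hgn₁ k hk; linarith
    have hconst' : ∀ k ≥ n₁, (S k ≤ z ↔ S n₁ ≤ z) := by
      intro k hk
      induction k, hk using Nat.le_induction with
      | base => rfl
      | succ k hk ih => rw [hconst k hk, ih]
    by_cases hz : S n₁ ≤ z
    · have hformula : ∀ k ≥ n₁, S k = S n₁ +
          ((∑ i ∈ Finset.range k, g i) - ∑ i ∈ Finset.range n₁, g i) := by
        intro k hk
        induction k, hk using Nat.le_induction with
        | base => simp
        | succ k hk ih =>
          rw [hS, if_pos ((hconst' k hk).mpr hz), ih, Finset.sum_range_succ]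
          ring
      have htend : Tendsto (fun k ↦ S n₁ +
          ((∑ i ∈ Finset.range k, g i) - ∑ i ∈ Finset.range n₁, g i)) atTop atTop := by
        apply tendsto_atTop_add_const_left
        apply tendsto_atTop_add_const_right
        exact hdiv
      obtain ⟨k, hk1, hk2⟩ : ∃ k, n₁ ≤ k ∧ z < S n₁ +
          ((∑ i ∈ Finset.range k, g i) - ∑ i ∈ Finset.range n₁, g i) := by
        have h := (htend.eventually_gt_atTop z).and (eventually_ge_atTop n₁)
        obtain ⟨k, hk⟩ := h.exists
        exact ⟨k, hk.2, hk.1⟩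
      rw [← hformula k hk1] at hk2
      exact absurd ((hconst' k hk1).mpr hz) (not_le.mpr hk2)
    · have hformula : ∀ k ≥ n₁, S k = S n₁ -
          ((∑ i ∈ Finset.range k, g i) - ∑ i ∈ Finset.range n₁, g i) := by
        intro k hk
        induction k, hk using Nat.le_induction with
        | base => simp
        | succ k hk ih =>
          have : ¬ S k ≤ z := fun h => hz ((hconst' k hk).mp h)
          rw [hS, if_neg this, ih, Finset.sum_range_succ]
          ring
      have htend : Tendsto (fun k ↦ S n₁ -
          ((∑ i ∈ Finset.range k, g i) - ∑ i ∈ Finset.range n₁, g i)) atTop atBot := by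
        have h1 : Tendsto (fun k ↦ -((∑ i ∈ Finset.range k, g i) - ∑ i ∈ Finset.range n₁, g i))
            atTop atBot := by
          apply tendsto_neg_atTop_atBot.comp
          exact tendsto_atTop_add_const_right _ _ hdiv
        simpa [sub_eq_add_neg] using tendsto_atBot_add_const_left atTop (S n₁) h1
      obtain ⟨k, hk1, hk2⟩ : ∃ k, n₁ ≤ k ∧ S n₁ -
          ((∑ i ∈ Finset.range k, g i) - ∑ i ∈ Finset.range n₁, g i) ≤ z := by
        have h := (htend.eventually_le_atBot z).and (eventually_ge_atTop n₁)
        obtain ⟨k, hk⟩ := h.exists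
        exact ⟨k, hk.2, hk.1⟩
      rw [← hformula k hk1] at hk2
      exact hz ((hconst' k hk1).mp hk2)
  exact ⟨k + 1, le_trans (le_trans (le_max_left _ _) hk) (Nat.le_succ k),
    v, hv1, by rw [← hSsum]; exact hkx⟩

private lemma tele {K : ℕ} (hK : 2 ≤ K) (M : ℕ) :
    ∑ n ∈ Finset.Ico K M, ((n:ℝ)⁻¹)^2 ≤ ((K:ℝ) - 1)⁻¹ := by
  have hK2 : (2:ℝ) ≤ (K:ℝ) := by exact_mod_cast hK
  have hK1 : (0:ℝ) < (K:ℝ) - 1 := by linarith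
  rcases le_or_gt M K with h | h
  · rw [Finset.Ico_eq_empty (by omega), Finset.sum_empty]
    positivity
  · have key : ∀ M, K ≤ M → ∑ n ∈ Finset.Ico K M, ((n:ℝ)⁻¹)^2
        ≤ ((K:ℝ)-1)⁻¹ - ((M:ℝ)-1)⁻¹ := by
      intro M hM
      induction M, hM using Nat.le_induction with
      | base => simp
      | succ M hM ih =>
        rw [Finset.sum_Ico_succ_top hM]
        have hM2 : (2:ℝ) ≤ (M:ℝ) := le_trans hK2 (by exact_mod_cast hM)
        have hM1 : (0:ℝ) < (M:ℝ) - 1 := by linarith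
        have hM0 : (0:ℝ) < (M:ℝ) := by linarith
        have h1 : ((M:ℝ)⁻¹)^2 ≤ ((M:ℝ)-1)⁻¹ - (M:ℝ)⁻¹ := by
          have e1 : ((M:ℝ)-1)⁻¹ - (M:ℝ)⁻¹ = (((M:ℝ)-1) * M)⁻¹ := by
            field_simp
            ring
          rw [e1, pow_two, ← mul_inv]
          apply inv_anti₀ (by positivity)
          nlinarith
        have e2 : ((M:ℝ) + 1) - 1 = (M:ℝ) := by ring
        push_cast
        rw [e2]
        linarith
    have h2 := key M h.le
    have hM1 : (0:ℝ) < (M:ℝ) - 1 := by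
      have : (2:ℝ) ≤ (M:ℝ) := le_trans hK2 (by exact_mod_cast h.le)
      linarith
    have : (0:ℝ) ≤ ((M:ℝ)-1)⁻¹ := by positivity
    linarith

end Helpers

/-- The Rademacher law on `ℝ`: `±1` with probability `1/2` each. -/
noncomputable def rademacherLaw : Measure ℝ :=
  (2 : ENNReal)⁻¹ • Measure.dirac (1 : ℝ) + (2 : ENNReal)⁻¹ • Measure.dirac (-1 : ℝ)

section RademacherHelpers

private lemma radem_apply {s : Set ℝ} (hs : MeasurableSet s) :
    rademacherLaw s = 2⁻¹ * s.indicator 1 1 + 2⁻¹ * s.indicator 1 (-1) := by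
  rw [rademacherLaw, Measure.add_apply, Measure.smul_apply, Measure.smul_apply,
    Measure.dirac_apply' _ hs, Measure.dirac_apply' _ hs, smul_eq_mul, smul_eq_mul]

private lemma radem_single {c : ℝ} (hc : c = 1 ∨ c = -1) : rademacherLaw {c} = 2⁻¹ := by
  rcases hc with rfl | rfl
  · rw [radem_apply (measurableSet_singleton _)]
    rw [Set.indicator_of_mem (by norm_num) 1, Set.indicator_of_notMem (by norm_num) 1]
    simp
  · rw [radem_apply (measurableSet_singleton _)]
    rw [Set.indicator_of_notMem (by norm_num) 1, Set.indicator_of_mem (by norm_num) 1]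
    simp

private lemma radem_compl_pm : rademacherLaw ({1, -1} : Set ℝ)ᶜ = 0 := by
  rw [radem_apply (by measurability)]
  rw [Set.indicator_of_notMem (by norm_num) 1, Set.indicator_of_notMem (by norm_num) 1]
  simp

private lemma integrable_dirac_of {f : ℝ → ℝ} (hf : Measurable f) (a : ℝ) :
    Integrable f (Measure.dirac a) := by
  refine ⟨hf.aestronglyMeasurable, ?_⟩
  simp [HasFiniteIntegral, lintegral_dirac' _ hf.enorm]

private lemma radem_integral {φ : ℝ → ℝ} (hφ : Measurable φ) :
    ∫ x, φ x ∂rademacherLaw = 2⁻¹ * φ 1 + 2⁻¹ * φ (-1) := by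
  rw [rademacherLaw, integral_add_measure ((integrable_dirac_of hφ 1).smul_measure
      (by norm_num)) ((integrable_dirac_of hφ (-1)).smul_measure (by norm_num)),
    integral_smul_measure, integral_smul_measure,
    integral_dirac' _ _ hφ.stronglyMeasurable, integral_dirac' _ _ hφ.stronglyMeasurable]
  norm_num [ENNReal.toReal_inv]

end RademacherHelpers

private lemma sum_over_subtype {F : Finset ℕ} (hF : ∀ p ∈ F, Nat.Prime p) (h : ℕ → ℝ) :
    ∑ i : {i : Subtype Nat.Prime // i ∈ F.subtype Nat.Prime}, h ((i : Subtype Nat.Prime) : ℕ)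
      = ∑ p ∈ F, h p := by
  refine (Finset.sum_coe_sort (F.subtype Nat.Prime) (fun q : Nat.Primes => h (q : ℕ))).trans ?_
  rw [Finset.sum_subtype_eq_sum_filter]
  rw [Finset.filter_true_of_mem hF]

set_option maxHeartbeats 2000000 in
/-- For independent fair random signs `f(p)` at the primes, the partial sum
`∑_{p ≤ x, p ≡ a (mod m)} f(p)/p` lands within `ε` of any target `z` with
probability at least some `δ > 0` independent of `x`, for all large `x`. -/
theorem prob_hit_target {Ω : Type*} [MeasureSpace Ω]
    [IsProbabilityMeasure (ℙ : Measure Ω)]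
    (f : ℕ → Ω → ℝ) (hmeas : ∀ n, Measurable (f n))
    (hindep : iIndepFun (fun p : Nat.Primes => f p) ℙ)
    (hdist : ∀ p : ℕ, p.Prime → Measure.map (f p) ℙ = rademacherLaw)
    (a m : ℕ) (ha : 1 ≤ a) (hm : 1 ≤ m) (hcop : Nat.Coprime a m)
    (z : ℝ) (ε : ℝ) (hε : 0 < ε) :
    ∃ δ : ℝ, 0 < δ ∧ ∃ X₀ : ℝ, ∀ x : ℝ, X₀ ≤ x →
      ENNReal.ofReal δ <
        ℙ {ω | |(∑ p ∈ (Finset.range (⌊x⌋₊ + 1)).filter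
            (fun p => p.Prime ∧ p % m = a % m), f p ω / p) - z| < ε} := by
  classical
  haveI : NeZero m := ⟨by omega⟩
  have hunit : IsUnit ((a : ZMod m)) := (ZMod.isUnit_iff_coprime a m).mpr hcop
  set g : ℕ → ℝ := fun n ↦ if n.Prime ∧ n % m = a % m then (n:ℝ)⁻¹ else 0 with hgdef
  have hgz : g = fun n : ℕ ↦ if n.Prime ∧ ((n : ZMod m) = ((a:ℕ) : ZMod m)) then (n:ℝ)⁻¹ else 0 := by
    funext n
    exact if_congr (and_congr_right fun _ => (ZMod.natCast_eq_natCast_iff' n a m).symm) rfl rfl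
  have hnots : ¬ Summable g := by rw [hgz]; exact lemA hunit
  have hg0 : ∀ n, 0 ≤ g n := by
    intro n; simp only [hgdef]; split <;> positivity
  have hdiv : Tendsto (fun n ↦ ∑ i ∈ Finset.range n, g i) atTop atTop :=
    (not_summable_iff_tendsto_nat_atTop_of_nonneg hg0).mp hnots
  have hgtend : Tendsto g atTop (𝓝 0) := by
    apply squeeze_zero hg0 (fun n => ?_) tendsto_inv_atTop_nhds_zero_nat
    simp only [hgdef]
    split
    · exact le_rfl
    · positivity
  -- choose K₀ so that tail variance is at most ε²/16
  set K₀ : ℕ := max 2 (⌈(16:ℝ)/ε^2⌉₊ + 2) with hK₀def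
  have hK₀2 : 2 ≤ K₀ := le_max_left _ _
  have hK₀ : ((K₀:ℝ) - 1)⁻¹ ≤ ε^2/16 := by
    have h1 : (16:ℝ)/ε^2 ≤ (K₀:ℝ) - 1 := by
      have h2 : ((⌈(16:ℝ)/ε^2⌉₊ + 2 : ℕ) : ℝ) ≤ (K₀:ℝ) :=
        Nat.cast_le.mpr (le_max_right _ _)
      have h3 := Nat.le_ceil ((16:ℝ)/ε^2)
      push_cast at h2
      linarith
    calc ((K₀:ℝ) - 1)⁻¹ ≤ ((16:ℝ)/ε^2)⁻¹ := by
          apply inv_anti₀ (by positivity) h1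
      _ = ε^2/16 := by rw [inv_div]
  -- greedy choice of signs
  obtain ⟨K, hKK₀, v, hv1, hvsum⟩ := greedy hdiv hgtend z (ε/2) (by positivity) K₀
  have hK2 : 2 ≤ K := le_trans hK₀2 hKK₀
  -- per-prime facts
  have hprob : ∀ p : ℕ, p.Prime → ∀ c : ℝ, (c = 1 ∨ c = -1) → ℙ (f p ⁻¹' {c}) = 2⁻¹ := by
    intro p hp c hc
    rw [← Measure.map_apply (hmeas p) (measurableSet_singleton c), hdist p hp, radem_single hc]
  have habs : ∀ p : ℕ, p.Prime → ∀ᵐ ω ∂(ℙ : Measure Ω), |f p ω| ≤ 1 := by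
    intro p hp
    have h0 : ℙ (f p ⁻¹' ({1,-1} : Set ℝ)ᶜ) = 0 := by
      rw [← Measure.map_apply (hmeas p) (by measurability), hdist p hp, radem_compl_pm]
    rw [ae_iff]
    refine measure_mono_null ?_ h0
    intro ω hω
    simp only [Set.mem_setOf_eq, not_le] at hω
    simp only [Set.mem_preimage, Set.mem_compl_iff, Set.mem_insert_iff, Set.mem_singleton_iff]
    push_neg
    constructor <;> intro h <;> rw [h] at hω <;> simp at hω
  have hmem : ∀ p, p.Prime → MemLp (f p) 2 ℙ := fun p hp =>
    MemLp.of_bound (hmeas p).aestronglyMeasurable 1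
      (by simpa [Real.norm_eq_abs] using habs p hp)
  have hEf : ∀ p, p.Prime → ∫ ω, f p ω ∂ℙ = 0 := by
    intro p hp
    have h := integral_map (μ := (ℙ : Measure Ω)) (f := fun y : ℝ => y) (hmeas p).aemeasurable
      (aestronglyMeasurable_id)
    rw [hdist p hp] at h
    rw [← h, radem_integral (φ := fun y : ℝ => y) measurable_id]
    norm_num
  have hEf2 : ∀ p, p.Prime → ∫ ω, (f p ω)^2 ∂ℙ = 1 := by
    intro p hp
    have h := integral_map (μ := (ℙ : Measure Ω)) (f := fun y : ℝ => y^2) (hmeas p).aemeasurable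
      (by fun_prop)
    rw [hdist p hp] at h
    rw [← h, radem_integral (by fun_prop)]
    norm_num
  have hvar : ∀ p, p.Prime → variance (f p) ℙ = 1 := by
    intro p hp
    rw [variance_eq_sub (hmem p hp)]
    have h1 : (ℙ : Measure Ω)[(f p)^2] = ∫ ω, (f p ω)^2 ∂ℙ := by
      apply integral_congr_ae
      filter_upwards [] with ω
      simp
    rw [h1, hEf2 p hp]
    have h2 : (ℙ : Measure Ω)[f p] = 0 := hEf p hp
    rw [h2]
    norm_num
  have hXmem : ∀ p, p.Prime → MemLp (fun ω => f p ω / p) 2 ℙ := by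
    intro p hp
    have := (hmem p hp).const_mul ((p:ℝ)⁻¹)
    simpa [div_eq_inv_mul] using this
  have hXvar : ∀ p, p.Prime → variance (fun ω => f p ω / p) ℙ = ((p:ℝ)⁻¹)^2 := by
    intro p hp
    have h1 : (fun ω => f p ω / p) = fun ω => (p:ℝ)⁻¹ * f p ω := by
      funext ω; rw [div_eq_inv_mul]
    rw [h1, variance_const_mul, hvar p hp, mul_one]
  have hXint : ∀ p, p.Prime → ∫ ω, f p ω / p ∂ℙ = 0 := by
    intro p hp; rw [integral_div, hEf p hp, zero_div]
  -- now the main estimate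
  refine ⟨(1/2:ℝ)^(K+2), by positivity, (K:ℝ), fun x hx => ?_⟩
  have hKfl : K ≤ ⌊x⌋₊ := Nat.le_floor hx
  set Fx := (Finset.range (⌊x⌋₊ + 1)).filter (fun p => p.Prime ∧ p % m = a % m) with hFx
  set Fhead := (Finset.range K).filter (fun p => p.Prime ∧ p % m = a % m) with hFhead
  set Ftail := Fx.filter (fun p => ¬ p < K) with hFtail
  have hheadeq : Fx.filter (fun p => p < K) = Fhead := by
    ext n
    simp only [hFx, hFhead, Finset.mem_filter, Finset.mem_range]
    constructor
    · rintro ⟨⟨h1, h2⟩, h3⟩; exact ⟨h3, h2⟩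
    · rintro ⟨h1, h2⟩; exact ⟨⟨by omega, h2⟩, h1⟩
  have hsplitsum : ∀ (h : ℕ → ℝ), ∑ p ∈ Fx, h p = ∑ p ∈ Fhead, h p + ∑ p ∈ Ftail, h p := by
    intro h
    rw [← hheadeq, ← Finset.sum_union (Finset.disjoint_filter_filter_not Fx Fx _),
      Finset.filter_union_filter_not_eq]
  have hheadprime : ∀ p ∈ Fhead, p.Prime := fun p hp => (Finset.mem_filter.mp hp).2.1
  have htailprime : ∀ p ∈ Ftail, p.Prime := fun p hp =>
    (Finset.mem_filter.mp (Finset.mem_filter.mp hp).1).2.1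
  set headSum : Ω → ℝ := fun ω => ∑ p ∈ Fhead, f p ω / p with hheadSum
  set tailSum : Ω → ℝ := fun ω => ∑ p ∈ Ftail, f p ω / p with htailSum
  set E1 : Set Ω := headSum ⁻¹' Metric.ball z (ε/2) with hE1
  set E2 : Set Ω := tailSum ⁻¹' Metric.ball 0 (ε/2) with hE2
  have hsub : E1 ∩ E2 ⊆ {ω | |(∑ p ∈ Fx, f p ω / p) - z| < ε} := by
    rintro ω ⟨h1, h2⟩
    rw [hE1, Set.mem_preimage, Metric.mem_ball, Real.dist_eq] at h1
    rw [hE2, Set.mem_preimage, Metric.mem_ball, Real.dist_eq, sub_zero] at h2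
    simp only [Set.mem_setOf_eq]
    rw [hsplitsum (fun p => f p ω / p)]
    have h3 : |headSum ω + tailSum ω - z| ≤ |headSum ω - z| + |tailSum ω| := by
      have : headSum ω + tailSum ω - z = (headSum ω - z) + tailSum ω := by ring
      rw [this]; exact abs_add_le _ _
    calc |(∑ p ∈ Fhead, f p ω / ↑p) + ∑ p ∈ Ftail, f p ω / ↑p - z|
        = |headSum ω + tailSum ω - z| := rfl
      _ ≤ |headSum ω - z| + |tailSum ω| := h3
      _ < ε/2 + ε/2 := add_lt_add h1 h2
      _ = ε := by ring
  -- independence of headSum and tailSum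
  set S : Finset Nat.Primes := Fhead.subtype Nat.Prime with hSdef
  set T : Finset Nat.Primes := Ftail.subtype Nat.Prime with hTdef
  have hdisjST : Disjoint S T := by
    rw [Finset.disjoint_left]
    intro i hi hi'
    replace hi : (i:ℕ) ∈ Fhead := (Finset.mem_subtype (p := Nat.Prime) (s := Fhead) (a := i)).mp hi
    replace hi' : (i:ℕ) ∈ Ftail := (Finset.mem_subtype (p := Nat.Prime) (s := Ftail) (a := i)).mp hi'
    have h1 : (i:ℕ) < K := Finset.mem_range.mp (Finset.mem_filter.mp hi).1
    have h2 : ¬ (i:ℕ) < K := (Finset.mem_filter.mp hi').2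
    exact h2 h1
  have hIndep2 := hindep.indepFun_finset S T hdisjST (fun i => hmeas i)
  set φ : ({ i : Nat.Primes // i ∈ S } → ℝ) → ℝ :=
    fun t => ∑ i : { i : Nat.Primes // i ∈ S }, t i / (((i : Nat.Primes) : ℕ) : ℝ) with hφdef
  set ψ : ({ i : Nat.Primes // i ∈ T } → ℝ) → ℝ :=
    fun t => ∑ i : { i : Nat.Primes // i ∈ T }, t i / (((i : Nat.Primes) : ℕ) : ℝ) with hψdef
  have hφm : Measurable φ :=
    Finset.measurable_sum _ (fun i _ => (measurable_pi_apply i).div_const _)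
  have hψm : Measurable ψ :=
    Finset.measurable_sum _ (fun i _ => (measurable_pi_apply i).div_const _)
  have hheadcomp : headSum = φ ∘ (fun ω (i : { i : Nat.Primes // i ∈ S }) => f i ω) := by
    funext ω
    exact (sum_over_subtype hheadprime (fun n => f n ω / n)).symm
  have htailcomp : tailSum = ψ ∘ (fun ω (i : { i : Nat.Primes // i ∈ T }) => f i ω) := by
    funext ω
    exact (sum_over_subtype htailprime (fun n => f n ω / n)).symm
  have hIndepSums : IndepFun headSum tailSum ℙ := by
    rw [hheadcomp, htailcomp]
    exact hIndep2.comp hφm hψm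
  have hprod : ℙ (E1 ∩ E2) = ℙ E1 * ℙ E2 :=
    hIndepSums.measure_inter_preimage_eq_mul _ _ measurableSet_ball measurableSet_ball
  -- lower bound for ℙ E1
  have hPE1 : (2:ENNReal)⁻¹ ^ K ≤ ℙ E1 := by
    set A : Set Ω := ⋂ i ∈ S, (f i) ⁻¹' {v i} with hA
    have hPA : ℙ A = ∏ i ∈ S, ℙ ((f i) ⁻¹' {v i}) :=
      hindep.meas_biInter (fun i _ => ⟨{v i}, measurableSet_singleton _, rfl⟩)
    have hPA2 : ℙ A = (2:ENNReal)⁻¹ ^ S.card := by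
      rw [hPA]
      have hall : ∀ i ∈ S, ℙ (f (i:ℕ) ⁻¹' {v (i:ℕ)}) = (2:ENNReal)⁻¹ :=
        fun (i : Nat.Primes) _ => hprob (i:ℕ) i.prop (v (i:ℕ)) (hv1 (i:ℕ))
      rw [Finset.prod_congr rfl hall, Finset.prod_const]
    have hcard : S.card ≤ K := by
      rw [show S.card = (Fhead.subtype Nat.Prime).card from rfl, Finset.card_subtype,
        Finset.filter_true_of_mem (fun p hp => hheadprime p hp)]
      exact le_trans (Finset.card_filter_le _ _) (le_of_eq (Finset.card_range K))
    have hAE1 : A ⊆ E1 := by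
      intro ω hω
      rw [hA, Set.mem_iInter₂] at hω
      have hval : ∀ p ∈ Fhead, f p ω = v p := by
        intro p hp
        have hpp : p.Prime := hheadprime p hp
        have := hω ⟨p, hpp⟩ ((Finset.mem_subtype (p := Nat.Prime) (s := Fhead) (a := ⟨p, hpp⟩)).mpr hp)
        simpa using this
      rw [hE1, Set.mem_preimage, Metric.mem_ball, Real.dist_eq]
      have hident : headSum ω = ∑ n ∈ Finset.range K, v n * g n := by
        rw [hheadSum]
        show (∑ p ∈ Fhead, f p ω / p) = _
        rw [Finset.sum_congr rfl (fun p hp => by rw [hval p hp])]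
        rw [hFhead, Finset.sum_filter]
        apply Finset.sum_congr rfl
        intro n _
        by_cases hq : n.Prime ∧ n % m = a % m
        · rw [if_pos hq]
          simp only [hgdef]
          rw [if_pos hq, div_eq_mul_inv]
        · rw [if_neg hq]
          simp only [hgdef]
          rw [if_neg hq, mul_zero]
      rw [hident]
      exact hvsum
    calc (2:ENNReal)⁻¹ ^ K ≤ (2:ENNReal)⁻¹ ^ S.card :=
          pow_le_pow_right_of_le_one' (by simp) hcard
      _ = ℙ A := hPA2.symm
      _ ≤ ℙ E1 := measure_mono hAE1
  -- lower bound for ℙ E2 via Chebyshev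
  have hPE2 : (2:ENNReal)⁻¹ ≤ ℙ E2 := by
    have hmemT : MemLp (∑ p ∈ Ftail, fun ω => f p ω / p) 2 ℙ :=
      memLp_finset_sum' _ (fun p hp => hXmem p (htailprime p hp))
    have hpairwise : Set.Pairwise ↑Ftail
        (fun p q => IndepFun (fun ω => f p ω / p) (fun ω => f q ω / q) ℙ) := by
      intro p hp q hq hpq
      have hpp : p.Prime := htailprime p (by simpa using hp)
      have hqp : q.Prime := htailprime q (by simpa using hq)
      have hne : (⟨p, hpp⟩ : Nat.Primes) ≠ ⟨q, hqp⟩ := by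
        intro h
        exact hpq (congrArg Subtype.val h)
      have h1 := hindep.indepFun hne
      exact h1.comp (measurable_id.div_const ((p:ℝ))) (measurable_id.div_const ((q:ℝ)))
    have hvarsum : variance (∑ p ∈ Ftail, fun ω => f p ω / p) ℙ
        = ∑ p ∈ Ftail, ((p:ℝ)⁻¹)^2 := by
      rw [IndepFun.variance_sum (fun p hp => hXmem p (htailprime p hp)) hpairwise]
      exact Finset.sum_congr rfl (fun p hp => hXvar p (htailprime p hp))
    have hvarle : variance (∑ p ∈ Ftail, fun ω => f p ω / p) ℙ ≤ ε^2/16 := by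
      rw [hvarsum]
      have hsub2 : Ftail ⊆ Finset.Ico K (⌊x⌋₊ + 1) := by
        intro p hp
        rw [hFtail, Finset.mem_filter] at hp
        rw [Finset.mem_Ico]
        refine ⟨by omega, ?_⟩
        have := (Finset.mem_filter.mp hp.1).1
        exact Finset.mem_range.mp this
      calc ∑ p ∈ Ftail, ((p:ℝ)⁻¹)^2 ≤ ∑ p ∈ Finset.Ico K (⌊x⌋₊ + 1), ((p:ℝ)⁻¹)^2 :=
            Finset.sum_le_sum_of_subset_of_nonneg hsub2 (fun i _ _ => by positivity)
        _ ≤ ((K:ℝ) - 1)⁻¹ := tele hK2 _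
        _ ≤ ((K₀:ℝ) - 1)⁻¹ := by
            apply inv_anti₀
            · have : (2:ℝ) ≤ (K₀:ℝ) := by exact_mod_cast hK₀2
              linarith
            · have : (K₀:ℝ) ≤ (K:ℝ) := by exact_mod_cast hKK₀
              linarith
        _ ≤ ε^2/16 := hK₀
    have hETzero : (ℙ : Measure Ω)[∑ p ∈ Ftail, fun ω => f p ω / p] = 0 := by
      simp only [Finset.sum_apply]
      rw [integral_finset_sum _ (fun p hp =>
        ((hXmem p (htailprime p hp)).integrable (by norm_num)))]
      rw [Finset.sum_congr rfl (fun p hp => hXint p (htailprime p hp))]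
      simp
    have hcheb := meas_ge_le_variance_div_sq (μ := (ℙ : Measure Ω)) hmemT
      (show (0:ℝ) < ε/2 by positivity)
    rw [hETzero] at hcheb
    have hsetid : {ω | ε/2 ≤ |(∑ p ∈ Ftail, fun ω => f p ω / p) ω - 0|} = E2ᶜ := by
      ext ω
      simp only [Set.mem_setOf_eq, Set.mem_compl_iff, hE2, Set.mem_preimage,
        Metric.mem_ball, Real.dist_eq, sub_zero, not_lt, Finset.sum_apply]
      exact Iff.rfl
    rw [hsetid] at hcheb
    have hbound2 : ℙ E2ᶜ ≤ 2⁻¹ := by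
      refine le_trans hcheb ?_
      have h1 : variance (∑ p ∈ Ftail, fun ω => f p ω / p) ℙ / (ε/2)^2 ≤ (1:ℝ)/2 := by
        have h2 : (0:ℝ) < (ε/2)^2 := by positivity
        rw [div_le_iff₀ h2]
        calc variance (∑ p ∈ Ftail, fun ω => f p ω / p) ℙ ≤ ε^2/16 := hvarle
          _ ≤ 1/2 * (ε/2)^2 := by nlinarith
      calc ENNReal.ofReal (variance (∑ p ∈ Ftail, fun ω => f p ω / p) ℙ / (ε/2)^2)
          ≤ ENNReal.ofReal ((1:ℝ)/2) := ENNReal.ofReal_le_ofReal h1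
        _ = 2⁻¹ := by
            rw [show (1:ℝ)/2 = 2⁻¹ by norm_num, ENNReal.ofReal_inv_of_pos (by norm_num)]
            norm_num
    have hE2meas : MeasurableSet E2 := by
      rw [hE2]
      refine MeasurableSet.preimage measurableSet_ball ?_
      rw [htailSum]
      exact Finset.measurable_sum _ (fun p _ => (hmeas p).div_const _)
    have hcompl : ℙ E2 = 1 - ℙ E2ᶜ := by
      have h := prob_compl_eq_one_sub (μ := (ℙ : Measure Ω)) hE2meas.compl
      rwa [compl_compl] at h
    rw [hcompl]
    calc (2:ENNReal)⁻¹ = 1 - 2⁻¹ := ENNReal.one_sub_inv_two.symm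
      _ ≤ 1 - ℙ E2ᶜ := tsub_le_tsub_left hbound2 1
  -- combine
  have hfinal : (2:ENNReal)⁻¹ ^ (K+1) ≤ ℙ {ω | |(∑ p ∈ Fx, f p ω / p) - z| < ε} := by
    calc (2:ENNReal)⁻¹ ^ (K+1) = (2:ENNReal)⁻¹ ^ K * 2⁻¹ := by rw [pow_succ]
      _ ≤ ℙ E1 * ℙ E2 := mul_le_mul' hPE1 hPE2
      _ = ℙ (E1 ∩ E2) := hprod.symm
      _ ≤ _ := measure_mono hsub
  have hofReal : ENNReal.ofReal ((1/2:ℝ)^(K+2)) = (2:ENNReal)⁻¹ ^ (K+2) := by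
    rw [ENNReal.ofReal_pow (by norm_num)]
    congr 1
    rw [show (1:ℝ)/2 = 2⁻¹ by norm_num, ENNReal.ofReal_inv_of_pos (by norm_num)]
    norm_num
  rw [hofReal]
  refine lt_of_lt_of_le ?_ hfinal
  have h2ne0 : ((2:ENNReal)⁻¹) ^ (K+1) ≠ 0 := by
    apply pow_ne_zero
    simp
  have h2netop : ((2:ENNReal)⁻¹) ^ (K+1) ≠ ⊤ := by
    apply ENNReal.pow_ne_top
    simp
  calc (2:ENNReal)⁻¹ ^ (K+2) = (2:ENNReal)⁻¹ ^ (K+1) * 2⁻¹ := by rw [pow_succ]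
    _ < (2:ENNReal)⁻¹ ^ (K+1) * 1 :=
        ENNReal.mul_lt_mul_right h2ne0 h2netop (by norm_num : (2:ENNReal)⁻¹ < 1)
    _ = (2:ENNReal)⁻¹ ^ (K+1) := mul_one _
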